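/- Let U be an r×r unitary with eigenangles θ_j ∈ (−π,π] and a, b unit vectors with U·a = b. If U has exactly two eigenangles θ₁, θ₂ with nonzero weight |⟨u_j,a⟩|², then |θ₁| + |θ₂| ≥ 2·arccos|⟨a,b⟩|. -/

import Mathlib

open Complex Finset in
theorem stmt7 {m : ℕ}
    (U : EuclideanSpace ℂ (Fin m) →ₗ[ℂ] EuclideanSpace ℂ (Fin m))
    (u : OrthonormalBasis (Fin m) ℂ (EuclideanSpace ℂ (Fin m))) (θ : Fin m → ℝ)
    (hθ : ∀ j, θ j ∈ Set.Ioc (-Real.pi) Real.pi)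
    (hU : ∀ j, U (u j) = Complex.exp ((θ j : ℂ) * Complex.I) • u j)
    (a b : EuclideanSpace ℂ (Fin m)) (ha : ‖a‖ = 1) (hb : ‖b‖ = 1) (hab : U a = b)
    (j₁ j₂ : Fin m) (hj : j₁ ≠ j₂)
    (hw : ∀ j, j ≠ j₁ → j ≠ j₂ → (inner ℂ (u j) a : ℂ) = 0) :
    2 * Real.arccos (‖(inner ℂ a b : ℂ)‖) ≤ |θ j₁| + |θ j₂| := by
  set c : Fin m → ℂ := fun j => inner ℂ (u j) a with hc
  have hcw : ∀ j, j ≠ j₁ → j ≠ j₂ → c j = 0 := hw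
  have hae : a = ∑ j, c j • u j := (u.sum_repr' a).symm
  have hbe : b = ∑ j, (Complex.exp ((θ j : ℂ) * Complex.I) * c j) • u j := by
    rw [← hab]; conv_lhs => rw [hae]
    rw [map_sum]
    refine Finset.sum_congr rfl fun j _ => ?_
    rw [map_smul, hU j, smul_smul, mul_comm]
  have hinner : (inner ℂ a b : ℂ) =
      ∑ j, (starRingEnd ℂ) (c j) * (Complex.exp ((θ j : ℂ) * Complex.I) * c j) := by
    conv_lhs => rw [hae, hbe]
    exact u.orthonormal.inner_sum _ _ _
  have hselfsum : (inner ℂ a a : ℂ) = ∑ j, (starRingEnd ℂ) (c j) * c j := by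
    conv_lhs => rw [hae]
    exact u.orthonormal.inner_sum _ _ _
  have hself : (inner ℂ a a : ℂ) = 1 := by
    rw [@inner_self_eq_norm_sq_to_K ℂ, ha]; norm_num
  set z₁ : ℝ := Complex.normSq (c j₁) with hz₁
  set z₂ : ℝ := Complex.normSq (c j₂) with hz₂
  have hpair : ∀ f : Fin m → ℂ, (∀ j, j ≠ j₁ → j ≠ j₂ → f j = 0) →
      ∑ j, f j = f j₁ + f j₂ := by
    intro f hf
    rw [← Finset.sum_subset (Finset.subset_univ {j₁, j₂})
      (fun x _ hx => by
        simp only [Finset.mem_insert, Finset.mem_singleton, not_or] at hx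
        exact hf x hx.1 hx.2)]
    exact Finset.sum_pair hj
  have key : (inner ℂ a b : ℂ) = (z₁ : ℂ) * Complex.exp ((θ j₁ : ℂ) * Complex.I)
      + (z₂ : ℂ) * Complex.exp ((θ j₂ : ℂ) * Complex.I) := by
    rw [hinner, hpair _ (fun j h1 h2 => by rw [hcw j h1 h2]; ring)]
    rw [hz₁, hz₂, Complex.normSq_eq_conj_mul_self, Complex.normSq_eq_conj_mul_self]
    ring
  have hzsum : z₁ + z₂ = 1 := by
    have h := hselfsum
    rw [hself, hpair _ (fun j h1 h2 => by rw [hcw j h1 h2]; ring)] at h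
    have h2 : ((z₁ : ℂ) + z₂) = 1 := by
      rw [hz₁, hz₂, Complex.normSq_eq_conj_mul_self, Complex.normSq_eq_conj_mul_self]
      exact h.symm
    exact_mod_cast h2
  have hz₁0 : 0 ≤ z₁ := Complex.normSq_nonneg _
  have hz₂0 : 0 ≤ z₂ := Complex.normSq_nonneg _
  set d : ℝ := (θ j₁ - θ j₂) / 2 with hd
  set s : ℝ := (θ j₁ + θ j₂) / 2 with hs
  have hcos : Real.cos d ≤ ‖(inner ℂ a b : ℂ)‖ := by
    have habs : ‖(inner ℂ a b : ℂ)‖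
        = ‖Complex.exp (((-s : ℝ) : ℂ) * Complex.I) * (inner ℂ a b : ℂ)‖ := by
      rw [norm_mul, Complex.norm_exp_ofReal_mul_I, one_mul]
    rw [habs]
    refine le_trans ?_ (Complex.re_le_norm _)
    have hexpand : Complex.exp (((-s : ℝ) : ℂ) * Complex.I) * (inner ℂ a b : ℂ)
        = (z₁ : ℂ) * Complex.exp ((d : ℂ) * Complex.I)
          + (z₂ : ℂ) * Complex.exp (((-d : ℝ) : ℂ) * Complex.I) := by
      rw [key, mul_add]
      have e1 : Complex.exp (((-s : ℝ) : ℂ) * Complex.I) * Complex.exp ((θ j₁ : ℂ) * Complex.I)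
          = Complex.exp ((d : ℂ) * Complex.I) := by
        rw [← Complex.exp_add]; congr 1; rw [hd, hs]; push_cast; ring
      have e2 : Complex.exp (((-s : ℝ) : ℂ) * Complex.I) * Complex.exp ((θ j₂ : ℂ) * Complex.I)
          = Complex.exp (((-d : ℝ) : ℂ) * Complex.I) := by
        rw [← Complex.exp_add]; congr 1; rw [hd, hs]; push_cast; ring
      rw [← e1, ← e2]; ring
    rw [hexpand]
    have hre : ((z₁ : ℂ) * Complex.exp ((d : ℂ) * Complex.I)
        + (z₂ : ℂ) * Complex.exp (((-d : ℝ) : ℂ) * Complex.I)).re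
        = z₁ * Real.cos d + z₂ * Real.cos (-d) := by
      simp only [Complex.add_re, Complex.mul_re, Complex.ofReal_re, Complex.ofReal_im,
        zero_mul, sub_zero, Complex.exp_ofReal_mul_I_re]
    rw [hre, Real.cos_neg, ← add_mul, hzsum, one_mul]
  have hπ : 0 < Real.pi := Real.pi_pos
  have h1 : |θ j₁| ≤ Real.pi := abs_le.2 ⟨by linarith [(hθ j₁).1], (hθ j₁).2⟩
  have h2 : |θ j₂| ≤ Real.pi := abs_le.2 ⟨by linarith [(hθ j₂).1], (hθ j₂).2⟩
  have hdle : |d| ≤ Real.pi := by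
    rw [hd, abs_div, _root_.abs_two, div_le_iff₀ (by norm_num : (0:ℝ) < 2)]
    calc |θ j₁ - θ j₂| ≤ |θ j₁| + |θ j₂| := abs_sub _ _
      _ ≤ Real.pi * 2 := by linarith
  have harccos : Real.arccos (‖(inner ℂ a b : ℂ)‖) ≤ |d| := by
    have hcd : Real.cos |d| ≤ ‖(inner ℂ a b : ℂ)‖ := by rwa [Real.cos_abs]
    calc Real.arccos (‖(inner ℂ a b : ℂ)‖)
        ≤ Real.arccos (Real.cos |d|) := by
          unfold Real.arccos
          have := Real.monotone_arcsin hcd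
          linarith
      _ = |d| := Real.arccos_cos (abs_nonneg _) hdle
  have hfin : |d| ≤ (|θ j₁| + |θ j₂|) / 2 := by
    rw [hd, abs_div, _root_.abs_two, div_le_div_iff_of_pos_right (by norm_num : (0:ℝ) < 2)]
    exact abs_sub _ _
  linarith
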